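/- Let G be a group containing a non-abelian free subgroup, i.e., suppose there exists an injective group homomorphism from FreeGroup (Fin 2) into G. Then G satisfies no non-trivial E-type iterated identity: for every n ≥ 1 and every w ∈ FreeGroup (Fin n) with w ≠ 1, the word w is not an E-type iterated identity of G. -/

import Mathlib

noncomputable section

/-- The verbal map: evaluate `w` with the variable of index `0` set to `x`
and the variable of index `i` set to `f i` for `i ≠ 0`. -/
def verbalMap {n : ℕ} [NeZero n] {G : Type*} [Group G] (w : FreeGroup (Fin n))
    (f : Fin n → G) : G → G :=
  fun x => FreeGroup.lift (Function.update f 0 x) w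

/-- `w` is an E-type (Engel type) iterated identity of `G`. -/
def IsEIteratedIdentity {n : ℕ} [NeZero n] (w : FreeGroup (Fin n)) (G : Type*) [Group G] : Prop :=
  ∀ f : Fin n → G, ∃ d : ℕ, 1 ≤ d ∧ (verbalMap w f)^[d] (f 0) = 1

/-- `G` has iterational depth at most `D` with respect to `w`. -/
def DepthAtMost {n : ℕ} [NeZero n] (w : FreeGroup (Fin n)) (G : Type*) [Group G] (D : ℕ) : Prop :=
  ∀ f : Fin n → G, ∃ d : ℕ, 1 ≤ d ∧ d ≤ D ∧ (verbalMap w f)^[d] (f 0) = 1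

open Matrix MatrixGroups UpperHalfPlane Pointwise Function

namespace IterIdent

/-- translation matrix `[[1, 2k],[0,1]]` -/
def Am (k : ℤ) : SL(2, ℤ) := ⟨!![1, 2*k; 0, 1], by simp [Matrix.det_fin_two_of]⟩

def Bm : SL(2, ℤ) := ⟨!![1, 0; 2, 1], by simp [Matrix.det_fin_two_of]⟩

def Bm' : SL(2, ℤ) := ⟨!![1, 0; -2, 1], by simp [Matrix.det_fin_two_of]⟩

lemma Am_mul (j k : ℤ) : Am j * Am k = Am (j + k) := by
  apply Subtype.ext
  show (Am j : Matrix (Fin 2) (Fin 2) ℤ) * (Am k : Matrix (Fin 2) (Fin 2) ℤ) = _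
  simp [Am, Matrix.mul_fin_two]
  ring_nf

lemma Bm_inv : Bm⁻¹ = Bm' := by
  rw [inv_eq_iff_mul_eq_one]
  apply Subtype.ext
  show (Bm : Matrix (Fin 2) (Fin 2) ℤ) * (Bm' : Matrix (Fin 2) (Fin 2) ℤ) = 1
  simp [Bm, Bm', Matrix.mul_fin_two, Matrix.one_fin_two]

lemma coe_Am_smul (k : ℤ) (z : ℍ) : ((Am k • z : ℍ) : ℂ) = (z : ℂ) + 2*k := by
  rw [UpperHalfPlane.specialLinearGroup_apply]
  simp [Am]

lemma coe_Bm_smul (z : ℍ) : ((Bm • z : ℍ) : ℂ) = (z : ℂ) / (2*(z:ℂ) + 1) := by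
  rw [UpperHalfPlane.specialLinearGroup_apply]
  simp [Bm]

lemma coe_Bm'_smul (z : ℍ) : ((Bm' • z : ℍ) : ℂ) = (z : ℂ) / (-2*(z:ℂ) + 1) := by
  rw [UpperHalfPlane.specialLinearGroup_apply]
  simp [Bm']


section PingPong

variable {n : ℕ}

/-- the free family: conjugates of `Bm` by powers of the translation. -/
def cg (i : Fin n) : SL(2, ℤ) := Am i * Bm * Am (-(i : ℤ))

/-- ping-pong set for positive powers: disk of radius 1/2 centered at `2i + 1/2`. -/
def Xs (i : Fin n) : Set ℍ := {z | norm ((z : ℂ) - (2*(i:ℕ) + 1/2)) ≤ 1/2}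

/-- ping-pong set for negative powers: disk of radius 1/2 centered at `2i - 1/2`. -/
def Ys (i : Fin n) : Set ℍ := {z | norm ((z : ℂ) - (2*(i:ℕ) - 1/2)) ≤ 1/2}

lemma sq_bound {u : ℂ} {r : ℝ} (h : norm u ≤ r) : u.re^2 + u.im^2 ≤ r^2 := by
  have h0 : (0:ℝ) ≤ norm u := norm_nonneg u
  have := Complex.sq_norm u
  rw [Complex.normSq_apply] at this
  nlinarith

lemma disk_disjoint (c₁ c₂ : ℝ) (h : 1 ≤ |c₁ - c₂|) :
    Disjoint {z : ℍ | norm ((z : ℂ) - (c₁ : ℂ)) ≤ 1/2}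
      {z : ℍ | norm ((z : ℂ) - (c₂ : ℂ)) ≤ 1/2} := by
  rw [Set.disjoint_left]
  rintro z h₁ h₂
  simp only [Set.mem_setOf_eq] at h₁ h₂
  have s₁ := sq_bound h₁
  have s₂ := sq_bound h₂
  simp only [Complex.sub_re, Complex.sub_im, Complex.ofReal_re, Complex.ofReal_im,
    UpperHalfPlane.coe_re, UpperHalfPlane.coe_im, sub_zero] at s₁ s₂
  have him : 0 < z.im := z.im_pos
  have hc : (c₁ - c₂)^2 ≥ 1 := by nlinarith [sq_abs (c₁ - c₂), abs_nonneg (c₁ - c₂)]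
  nlinarith [s₁, s₂, him, hc]

lemma coe_im_pos (z : ℍ) : 0 < ((z:ℂ)).im := z.coe_im_pos

lemma denom_ne (w : ℂ) (hw : 0 < w.im) : 2*w + 1 ≠ 0 := by
  intro h
  have : (2*w + 1).im = 0 := by rw [h]; simp
  simp [Complex.add_im, Complex.mul_im] at this
  nlinarith

lemma denom_ne' (w : ℂ) (hw : 0 < w.im) : -2*w + 1 ≠ 0 := by
  intro h
  have : (-2*w + 1).im = 0 := by rw [h]; simp
  simp [Complex.add_im, Complex.mul_im] at this
  nlinarith

lemma key_frac (w : ℂ) (hw : 0 < w.im) (h : 1 < norm (2*w + 1)) :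
    norm (w/(2*w+1) - 1/2) ≤ 1/2 := by
  have h2 : 2*w + 1 ≠ 0 := denom_ne w hw
  have hprod : (w/(2*w+1) - 1/2) * (2*(2*w+1)) = -1 := by
    have hc : w/(2*w+1) * (2*w+1) = w := div_mul_cancel₀ w h2
    linear_combination 2 * hc
  have habs := congrArg norm hprod
  rw [norm_mul, norm_mul] at habs
  simp only [Complex.norm_ofNat, norm_neg, norm_one] at habs
  nlinarith [norm_nonneg (w/(2*w+1) - 1/2)]

lemma key_frac' (w : ℂ) (hw : 0 < w.im) (h : 1 < norm (-2*w + 1)) :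
    norm (w/(-2*w+1) + 1/2) ≤ 1/2 := by
  have h2 : -2*w + 1 ≠ 0 := denom_ne' w hw
  have h2'' : 1 - w*2 ≠ 0 := by intro hh; apply h2; linear_combination hh
  have hprod : (w/(-2*w+1) + 1/2) * (2*(-2*w+1)) = 1 := by
    rw [show -2*w+1 = 1 - w*2 by ring]; field_simp; ring
  have habs := congrArg norm hprod
  rw [norm_mul, norm_mul] at habs
  simp only [Complex.norm_ofNat, norm_one] at habs
  nlinarith [norm_nonneg (w/(-2*w+1) + 1/2)]

lemma cg_smul_decomp (i : Fin n) (z : ℍ) :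
    cg i • z = Am (i:ℤ) • (Bm • (Am (-(i:ℤ)) • z)) := by
  rw [cg, mul_smul, mul_smul]

lemma cg_inv_smul_decomp (i : Fin n) (z : ℍ) :
    (cg i)⁻¹ • z = Am (i:ℤ) • (Bm' • (Am (-(i:ℤ)) • z)) := by
  have : (cg i)⁻¹ = Am (i:ℤ) * Bm' * Am (-(i:ℤ)) := by
    rw [cg, _root_.mul_inv_rev, _root_.mul_inv_rev, Bm_inv]
    rw [show (Am (i:ℤ))⁻¹ = Am (-(i:ℤ)) by
      rw [inv_eq_iff_mul_eq_one, Am_mul]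
      apply Subtype.ext; simp [Am, Matrix.one_fin_two]]
    rw [show (Am (-(i:ℤ)))⁻¹ = Am ((i:ℤ)) by
      rw [inv_eq_iff_mul_eq_one, Am_mul]
      apply Subtype.ext; simp [Am, Matrix.one_fin_two]]
    group
  rw [this, mul_smul, mul_smul]

lemma hX_pp (i : Fin n) : (cg i) • (Ys i)ᶜ ⊆ Xs i := by
  rintro y ⟨z, hz, rfl⟩
  simp only [Set.mem_compl_iff, Ys, Set.mem_setOf_eq, not_le] at hz
  set w : ℍ := Am (-(i:ℤ)) • z with hwdef
  have hw : (w : ℂ) = (z : ℂ) - 2*(i:ℕ) := by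
    rw [hwdef, coe_Am_smul]; push_cast; ring
  have himw : 0 < ((w:ℂ)).im := coe_im_pos w
  have habs : 1 < norm (2*(w:ℂ) + 1) := by
    have e : 2*(w:ℂ) + 1 = 2 * ((z:ℂ) - (2*(i:ℕ) - 1/2)) := by rw [hw]; push_cast; ring
    rw [e, norm_mul]
    simp only [Complex.norm_ofNat]
    nlinarith
  have hb : ((Bm • w : ℍ) : ℂ) = (w:ℂ)/(2*(w:ℂ)+1) := coe_Bm_smul w
  have hkey := key_frac (w:ℂ) himw habs
  have hre : ((cg i • z : ℍ) : ℂ) - (2*(i:ℕ) + 1/2) = (w:ℂ)/(2*(w:ℂ)+1) - 1/2 := by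
    rw [cg_smul_decomp, ← hwdef, coe_Am_smul, hb]; push_cast; ring
  show cg i • z ∈ Xs i
  rw [Xs, Set.mem_setOf_eq, hre]
  exact hkey

lemma hY_pp (i : Fin n) : (cg i)⁻¹ • (Xs i)ᶜ ⊆ Ys i := by
  rintro y ⟨z, hz, rfl⟩
  simp only [Set.mem_compl_iff, Xs, Set.mem_setOf_eq, not_le] at hz
  set w : ℍ := Am (-(i:ℤ)) • z with hwdef
  have hw : (w : ℂ) = (z : ℂ) - 2*(i:ℕ) := by
    rw [hwdef, coe_Am_smul]; push_cast; ring
  have himw : 0 < ((w:ℂ)).im := coe_im_pos w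
  have habs : 1 < norm (-2*(w:ℂ) + 1) := by
    have e : -2*(w:ℂ) + 1 = -2 * ((z:ℂ) - (2*(i:ℕ) + 1/2)) := by rw [hw]; push_cast; ring
    rw [e, norm_mul]
    rw [show ‖(-2:ℂ)‖ = 2 by
      rw [show (-2 : ℂ) = -(2:ℂ) by ring, norm_neg]; simp]
    nlinarith
  have hb : ((Bm' • w : ℍ) : ℂ) = (w:ℂ)/(-2*(w:ℂ)+1) := coe_Bm'_smul w
  have hkey := key_frac' (w:ℂ) himw habs
  have hre : (((cg i)⁻¹ • z : ℍ) : ℂ) - (2*(i:ℕ) - 1/2) = (w:ℂ)/(-2*(w:ℂ)+1) + 1/2 := by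
    rw [cg_inv_smul_decomp, ← hwdef, coe_Am_smul, hb]; push_cast; ring
  show (cg i)⁻¹ • z ∈ Ys i
  rw [Ys, Set.mem_setOf_eq, hre]
  exact hkey

lemma nat_center (c : ℝ) :
    {z : ℍ | norm ((z:ℂ) - (c:ℂ)) ≤ 1/2} = {z : ℍ | norm ((z:ℂ) - (c:ℂ)) ≤ 1/2} := rfl

lemma Xs_eq (i : Fin n) :
    Xs i = {z : ℍ | norm ((z:ℂ) - ((2*(i:ℕ) + 1/2 : ℝ) : ℂ)) ≤ 1/2} := by
  ext z
  rw [Xs, Set.mem_setOf_eq, Set.mem_setOf_eq,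
    show ((2*(i:ℕ) + 1/2 : ℝ) : ℂ) = 2*(i:ℕ) + 1/2 by push_cast; ring]

lemma Ys_eq (i : Fin n) :
    Ys i = {z : ℍ | norm ((z:ℂ) - ((2*(i:ℕ) - 1/2 : ℝ) : ℂ)) ≤ 1/2} := by
  ext z
  rw [Ys, Set.mem_setOf_eq, Set.mem_setOf_eq,
    show ((2*(i:ℕ) - 1/2 : ℝ) : ℂ) = 2*(i:ℕ) - 1/2 by push_cast; ring]

lemma int_dist {a b : ℤ} (h : a ≠ b) : (1:ℝ) ≤ |(a:ℝ) - (b:ℝ)| := by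
  have h1 : 1 ≤ |a - b| := Int.one_le_abs (sub_ne_zero.mpr h)
  have : ((1:ℤ):ℝ) ≤ ((|a - b| : ℤ) : ℝ) := by exact_mod_cast h1
  rw [Int.cast_abs] at this
  push_cast at this
  simpa using this

-- distance between half-integer centers indexed by distinct integers
lemma dist_ge {a b : ℤ} (h : 2 ≤ a - b ∨ 2 ≤ b - a) : (1:ℝ) ≤ |((a:ℝ))/2 - ((b:ℝ))/2| := by
  have h1 : 2 ≤ |a - b| := by
    rcases h with h' | h'
    · rw [abs_of_nonneg (by omega)]; omega
    · rw [abs_of_nonpos (by omega)]; omega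
  have : ((2:ℤ):ℝ) ≤ ((|a - b| : ℤ) : ℝ) := by exact_mod_cast h1
  rw [Int.cast_abs] at this
  push_cast at this
  rw [show (a:ℝ)/2 - (b:ℝ)/2 = ((a:ℝ) - b)/2 by ring, abs_div]
  rw [show |(2:ℝ)| = 2 by norm_num]
  linarith

lemma center_X (i : Fin n) : (2*((i:ℕ):ℝ) + 1/2) = ((4*((i:ℕ):ℤ) + 1 : ℤ) : ℝ)/2 := by
  push_cast; ring

lemma center_Y (i : Fin n) : (2*((i:ℕ):ℝ) - 1/2) = ((4*((i:ℕ):ℤ) - 1 : ℤ) : ℝ)/2 := by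
  push_cast; ring

lemma hXdisj_pp : Pairwise (Disjoint on (Xs (n := n))) := by
  intro i j hij
  have : Disjoint (Xs i) (Xs j) := by
    rw [Xs_eq, Xs_eq]
    apply disk_disjoint
    rw [center_X, center_X]
    apply dist_ge
    have : ((i:ℕ):ℤ) ≠ ((j:ℕ):ℤ) := by
      simpa using fun h => hij (Fin.ext (by exact_mod_cast h))
    omega
  exact this

lemma hYdisj_pp : Pairwise (Disjoint on (Ys (n := n))) := by
  intro i j hij
  have : Disjoint (Ys i) (Ys j) := by
    rw [Ys_eq, Ys_eq]
    apply disk_disjoint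
    rw [center_Y, center_Y]
    apply dist_ge
    have : ((i:ℕ):ℤ) ≠ ((j:ℕ):ℤ) := by
      simpa using fun h => hij (Fin.ext (by exact_mod_cast h))
    omega
  exact this

lemma hXYdisj_pp (i j : Fin n) : Disjoint (Xs i) (Ys j) := by
  rw [Xs_eq, Ys_eq]
  apply disk_disjoint
  rw [center_X, center_Y]
  apply dist_ge
  omega

lemma hXnonempty_pp (i : Fin n) : (Xs i).Nonempty := by
  have him : (0:ℝ) < (2*((i:ℕ):ℂ) + 1/2 + Complex.I * (1/2)).im := by
    simp
  refine ⟨UpperHalfPlane.mk (2*((i:ℕ):ℂ) + 1/2 + Complex.I * (1/2)) him, ?_⟩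
  show norm (((UpperHalfPlane.mk _ him : ℍ) : ℂ) - (2*((i:ℕ):ℂ) + 1/2)) ≤ 1/2
  rw [show ((UpperHalfPlane.mk (2*((i:ℕ):ℂ) + 1/2 + Complex.I * (1/2)) him : ℍ) : ℂ)
      = 2*((i:ℕ):ℂ) + 1/2 + Complex.I * (1/2) from rfl]
  rw [show (2*((i:ℕ):ℂ) + 1/2 + Complex.I * (1/2)) - (2*((i:ℕ):ℂ) + 1/2)
      = Complex.I * (1/2) by ring]
  rw [norm_mul, Complex.norm_I]
  norm_num

/-- The elements `cg i`, `i : Fin n`, generate a free subgroup of `SL(2,ℤ)`. -/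
theorem lift_cg_injective (hn : 2 ≤ n) :
    Function.Injective (FreeGroup.lift (cg (n := n))) := by
  haveI : Nontrivial (Fin n) := ⟨⟨0, by omega⟩, ⟨1, by omega⟩, by
    intro h; exact absurd (congrArg Fin.val h) (by norm_num)⟩
  exact FreeGroup.injective_lift_of_ping_pong cg Xs Ys hXnonempty_pp hXdisj_pp hYdisj_pp
    hXYdisj_pp hX_pp hY_pp

end PingPong


lemma cg_def {n : ℕ} (i : Fin n) : cg i = Am (i:ℤ) * Bm * Am (-(i:ℤ)) := rfl

section Embed

lemma freeGroup_map_injective {α β : Type*} {f : α → β} (g : β → α) (hgf : ∀ a, g (f a) = a) :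
    Function.Injective (FreeGroup.map f) := by
  intro x y h
  have h2 : FreeGroup.map g (FreeGroup.map f x) = FreeGroup.map g (FreeGroup.map f y) := by
    rw [h]
  rw [FreeGroup.map.comp, FreeGroup.map.comp] at h2
  have : (g ∘ f) = id := funext hgf
  rwa [this, FreeGroup.map.id, FreeGroup.map.id] at h2

lemma freeGroup_isEmpty_eq_one {α : Type*} [IsEmpty α] (x : FreeGroup α) : x = 1 := by
  rw [← FreeGroup.toWord_eq_nil_iff]
  cases h : x.toWord with
  | nil => rfl
  | cons a t => exact (IsEmpty.false a.1).elim

lemma Am_zero : Am 0 = 1 := by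
  apply mul_right_cancel (b := Am 0)
  rw [one_mul, Am_mul]
  norm_num

lemma Am_inv (k : ℤ) : (Am k)⁻¹ = Am (-k) := by
  rw [inv_eq_iff_mul_eq_one, Am_mul, show k + -k = 0 by ring]
  exact Am_zero

lemma Am_pow (k : ℕ) : (Am 1)^k = Am k := by
  induction k with
  | zero => simpa using Am_zero.symm
  | succ m ih => rw [pow_succ, ih, Am_mul]; norm_num

/-- the conjugates `x^i y x^(-i)` in the free group on two letters. -/
def gamma (i : ℕ) : FreeGroup Bool :=
  (FreeGroup.of false)^i * FreeGroup.of true * ((FreeGroup.of false)^i)⁻¹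

/-- evaluation homomorphism F₂ → SL(2,ℤ) -/
def Phi2 : FreeGroup Bool →* SL(2,ℤ) :=
  FreeGroup.lift (fun b => if b then Bm else Am 1)

lemma Phi2_gamma (i : ℕ) : Phi2 (gamma i) = Am i * Bm * Am (-(i:ℤ)) := by
  have ht : Phi2 (FreeGroup.of true) = Bm := by rw [Phi2, FreeGroup.lift_apply_of]; simp
  have hf : Phi2 (FreeGroup.of false) = Am 1 := by rw [Phi2, FreeGroup.lift_apply_of]; simp
  rw [gamma, _root_.map_mul, _root_.map_mul, _root_.map_inv, _root_.map_pow, ht, hf,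
    Am_pow, Am_inv]

/-- The `gamma i` generate a free subgroup of the free group on two letters:
for `n ≥ 2`, the homomorphism `FreeGroup (Fin n) → FreeGroup Bool` is injective. -/
theorem gammaHom_injective {n : ℕ} (hn : 2 ≤ n) :
    Function.Injective (FreeGroup.lift (fun i : Fin n => gamma (i : ℕ))) := by
  have key : Phi2.comp (FreeGroup.lift (fun i : Fin n => gamma (i : ℕ)))
      = FreeGroup.lift (cg (n := n)) := by
    apply FreeGroup.ext_hom
    intro a
    simp only [MonoidHom.comp_apply, FreeGroup.lift_apply_of]
    rw [Phi2_gamma, cg_def]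
  have hinj := lift_cg_injective hn
  rw [← key] at hinj
  exact Function.Injective.of_comp hinj

/-- any free group of finite rank embeds into the free group on two letters -/
theorem exists_embedding_into_F2 (α : Type) [Finite α] :
    ∃ ψ : FreeGroup α →* FreeGroup Bool, Function.Injective ψ := by
  obtain ⟨m, ⟨e⟩⟩ := Finite.exists_equiv_fin α
  rcases isEmpty_or_nonempty α with hα | hα
  · exact ⟨1, fun x y _ => by
      rw [freeGroup_isEmpty_eq_one x, freeGroup_isEmpty_eq_one y]⟩
  · set f : α → Fin (m + 2) := (Fin.castLE (by omega)) ∘ e with hf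
    have hfinj : Function.Injective f := (Fin.castLE_injective _).comp e.injective
    obtain ⟨g, hg⟩ := hfinj.hasLeftInverse
    refine ⟨(FreeGroup.lift (fun i : Fin (m+2) => gamma (i : ℕ))).comp (FreeGroup.map f),
      ?_⟩
    exact (gammaHom_injective (by omega)).comp (freeGroup_map_injective g hg)

/-- any free group of finite rank embeds into `SL(2,ℤ)` -/
theorem exists_embedding_into_SL (α : Type) [Finite α] :
    ∃ ψ : FreeGroup α →* SL(2,ℤ), Function.Injective ψ := by
  obtain ⟨m, ⟨e⟩⟩ := Finite.exists_equiv_fin α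
  rcases isEmpty_or_nonempty α with hα | hα
  · exact ⟨1, fun x y _ => by
      rw [freeGroup_isEmpty_eq_one x, freeGroup_isEmpty_eq_one y]⟩
  · set f : α → Fin (m + 2) := (Fin.castLE (by omega)) ∘ e with hf
    have hfinj : Function.Injective f := (Fin.castLE_injective _).comp e.injective
    obtain ⟨g, hg⟩ := hfinj.hasLeftInverse
    refine ⟨(FreeGroup.lift (cg (n := m+2))).comp (FreeGroup.map f), ?_⟩
    exact (lift_cg_injective (by omega)).comp (freeGroup_map_injective g hg)

end Embed

section Hopf

/-- residual finiteness via reduction of `SL(2,ℤ)` mod `q+1`. -/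
theorem exists_finite_quotient (α : Type) [Finite α] (x : FreeGroup α) (hx : x ≠ 1) :
    ∃ (q : ℕ) (ρ : FreeGroup α →* Matrix.SpecialLinearGroup (Fin 2) (ZMod (q+1))),
      ρ x ≠ 1 := by
  obtain ⟨ψ, hψ⟩ := exists_embedding_into_SL α
  set M := ψ x with hM
  have hM1 : M ≠ 1 := by
    intro h
    apply hx
    apply hψ
    rw [_root_.map_one]
    exact h
  obtain ⟨i, j, hij⟩ : ∃ i j, (M : Matrix (Fin 2) (Fin 2) ℤ) i j
      ≠ ((1 : SL(2,ℤ)) : Matrix (Fin 2) (Fin 2) ℤ) i j := by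
    by_contra hc
    push_neg at hc
    exact hM1 (Subtype.ext (by ext i j; exact hc i j))
  set d : ℤ := (M : Matrix (Fin 2) (Fin 2) ℤ) i j
      - ((1 : SL(2,ℤ)) : Matrix (Fin 2) (Fin 2) ℤ) i j with hd
  have hdne : d ≠ 0 := sub_ne_zero.mpr hij
  refine ⟨d.natAbs, (Matrix.SpecialLinearGroup.map
      (Int.castRingHom (ZMod (d.natAbs + 1)))).comp ψ, ?_⟩
  intro h1
  simp only [MonoidHom.comp_apply, ← hM] at h1
  have hentry := congrArg (fun g : Matrix.SpecialLinearGroup (Fin 2) (ZMod (d.natAbs+1)) =>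
    (g : Matrix (Fin 2) (Fin 2) (ZMod (d.natAbs+1))) i j) h1
  simp only [Matrix.SpecialLinearGroup.map_apply_coe, RingHom.mapMatrix_apply,
    Matrix.map_apply, Int.coe_castRingHom] at hentry
  have hone : ((1 : Matrix.SpecialLinearGroup (Fin 2) (ZMod (d.natAbs+1)))
      : Matrix (Fin 2) (Fin 2) (ZMod (d.natAbs+1))) i j
      = ((((1 : SL(2,ℤ)) : Matrix (Fin 2) (Fin 2) ℤ) i j : ℤ) : ZMod (d.natAbs+1)) := by
    by_cases hij2 : i = j <;>
      simp [Matrix.SpecialLinearGroup.coe_one, Matrix.one_apply, hij2]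
  have hcast : ((d : ℤ) : ZMod (d.natAbs + 1)) = 0 := by
    rw [hd]
    push_cast
    rw [hentry, hone]
    ring
  rw [ZMod.intCast_zmod_eq_zero_iff_dvd] at hcast
  have := Int.le_of_dvd (abs_pos.mpr hdne) ((dvd_abs _ _).mpr hcast)
  have h2 : (d.natAbs : ℤ) = |d| := Int.abs_eq_natAbs d ▸ rfl
  omega

instance homFinite (α : Type) [Finite α] (Q : Type*) [Group Q] [Finite Q] :
    Finite (FreeGroup α →* Q) :=
  Finite.of_equiv _ FreeGroup.lift

/-- Free groups of finite rank are Hopfian: a surjective endomorphism is injective. -/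
theorem hopfian (α : Type) [Finite α] (f : FreeGroup α →* FreeGroup α)
    (hf : Function.Surjective f) : Function.Injective f := by
  rw [injective_iff_map_eq_one]
  intro x hx1
  by_contra hx
  obtain ⟨q, ρ, hρ⟩ := exists_finite_quotient α x hx
  set Q := Matrix.SpecialLinearGroup (Fin 2) (ZMod (q+1)) with hQ
  have hΦinj : Function.Injective (fun χ : FreeGroup α →* Q => χ.comp f) := by
    intro χ χ' h
    refine DFunLike.ext _ _ fun y => ?_
    obtain ⟨z, rfl⟩ := hf y
    exact DFunLike.congr_fun h z
  have hΦsurj := Finite.injective_iff_surjective.mp hΦinj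
  obtain ⟨χ, hχ⟩ := hΦsurj ρ
  apply hρ
  rw [← hχ]
  show χ (f x) = 1
  rw [hx1, _root_.map_one]

/-- Hopf property transported across free groups with equinumerous finite bases. -/
theorem hopfian_pair {α β : Type} [Finite α] [Finite β] (h : Nat.card α = Nat.card β)
    (f : FreeGroup α →* FreeGroup β) (hf : Function.Surjective f) :
    Function.Injective f := by
  haveI := Fintype.ofFinite α
  haveI := Fintype.ofFinite β
  have hcard : Fintype.card α = Fintype.card β := by
    rwa [Nat.card_eq_fintype_card, Nat.card_eq_fintype_card] at h
  obtain e : α ≃ β := Fintype.equivOfCardEq hcard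
  set f' : FreeGroup α →* FreeGroup α := (FreeGroup.map e.symm).comp f with hf'
  have hmapinj : Function.Injective (FreeGroup.map (e.symm : β → α)) :=
    freeGroup_map_injective e (fun b => e.apply_symm_apply b)
  have hmapsurj : Function.Surjective (FreeGroup.map (e.symm : β → α)) := by
    intro y
    exact ⟨FreeGroup.map e y, by rw [FreeGroup.map.comp]; simp [FreeGroup.map.id']⟩
  have hf'surj : Function.Surjective f' := hmapsurj.comp hf
  have hf'inj := hopfian α f' hf'surj
  intro x y hxy
  apply hf'inj
  show FreeGroup.map e.symm (f x) = FreeGroup.map e.symm (f y)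
  rw [hxy]

/-- counting homomorphisms into `C₂` bounds the rank of a quotient free group. -/
theorem card_le_of_surjective {α β : Type} [Finite α] (f : FreeGroup α →* FreeGroup β)
    (hf : Function.Surjective f) : Finite β ∧ Nat.card β ≤ Nat.card α := by
  classical
  set Q := Multiplicative (ZMod 2) with hQ
  set Ψ : (β → Q) → (α → Q) := fun h a => (FreeGroup.lift h) (f (FreeGroup.of a)) with hΨ
  have hΨinj : Function.Injective Ψ := by
    intro h h' hhh
    have h1 : (FreeGroup.lift h).comp f = (FreeGroup.lift h').comp f := by
      apply FreeGroup.ext_hom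
      intro a
      exact congrFun hhh a
    have h2 : FreeGroup.lift h = FreeGroup.lift h' := by
      refine DFunLike.ext _ _ fun y => ?_
      obtain ⟨z, rfl⟩ := hf y
      exact DFunLike.congr_fun h1 z
    funext b
    have := DFunLike.congr_fun h2 (FreeGroup.of b)
    simpa [FreeGroup.lift_apply_of] using this
  -- β is finite
  have hβfin : Finite β := by
    have hemb : Function.Injective (fun b : β => fun x : β =>
        if x = b then (Multiplicative.ofAdd (1 : ZMod 2)) else 1) := by
      intro b b' hbb
      by_contra hne
      have h3 := congrFun hbb b
      simp only [eq_self_iff_true, if_true, if_neg hne] at h3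
      exact (by decide : (Multiplicative.ofAdd (1 : ZMod 2)) ≠ 1) h3
    exact Finite.of_injective _ (hΨinj.comp hemb)
  refine ⟨hβfin, ?_⟩
  haveI := hβfin
  have hc := Nat.card_le_card_of_injective Ψ hΨinj
  rw [Nat.card_fun, Nat.card_fun] at hc
  have hQ2 : Nat.card Q = 2 := by
    rw [hQ, Nat.card_eq_fintype_card]
    rfl
  rw [hQ2] at hc
  exact (Nat.pow_le_pow_iff_right (by norm_num)).mp hc

end Hopf


section Star

variable {n : ℕ} [NeZero n]

local notation "F" => FreeGroup (Fin n)
local notation "S" => {i : Fin n // i ≠ 0}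

/-- inclusion of the free group on the nonzero generators -/
def J : FreeGroup {i : Fin n // i ≠ 0} →* FreeGroup (Fin n) :=
  FreeGroup.map Subtype.val

/-- retraction killing the generator `0` -/
def rho : FreeGroup (Fin n) →* FreeGroup {i : Fin n // i ≠ 0} :=
  FreeGroup.lift (fun i => if h : i = 0 then 1 else FreeGroup.of ⟨i, h⟩)

lemma rho_J : (rho (n := n)).comp (J (n := n)) = MonoidHom.id _ := by
  apply FreeGroup.ext_hom
  intro a
  simp only [MonoidHom.comp_apply, MonoidHom.id_apply, J, FreeGroup.map.of, rho,
    FreeGroup.lift_apply_of, dif_neg a.2]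

lemma rho_J_apply (y : FreeGroup {i : Fin n // i ≠ 0}) : rho (J y) = y :=
  DFunLike.congr_fun (rho_J (n := n)) y

/-- the substitution endomorphism sending the generator `0` to `w` -/
def sig (w : FreeGroup (Fin n)) : FreeGroup (Fin n) →* FreeGroup (Fin n) :=
  FreeGroup.lift (Function.update FreeGroup.of (0 : Fin n) w)

lemma sig_of_zero (w : F) : sig w (FreeGroup.of 0) = w := by
  rw [sig, FreeGroup.lift_apply_of, Function.update_self]

lemma sig_of_ne (w : F) {i : Fin n} (hi : i ≠ 0) : sig w (FreeGroup.of i) = FreeGroup.of i := by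
  rw [sig, FreeGroup.lift_apply_of, Function.update_of_ne hi]

lemma sig_J (w : F) : (sig w).comp (J (n := n)) = J (n := n) := by
  apply FreeGroup.ext_hom
  intro a
  simp only [MonoidHom.comp_apply, J, FreeGroup.map.of]
  exact sig_of_ne w a.2

lemma sig_J_apply (w : F) (y : FreeGroup {i : Fin n // i ≠ 0}) : sig w (J y) = J y :=
  DFunLike.congr_fun (sig_J w) y

/-- Key lemma: substituting an element outside the subgroup generated by the other
generators is an injective endomorphism of the free group. -/
theorem sig_injective (w : F) (hw : w ∉ (J (n := n)).range) : Function.Injective (sig w) := by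
  set H : Subgroup F := (sig w).range with hH
  have hq : Function.Surjective (sig w).rangeRestrict := MonoidHom.rangeRestrict_surjective _
  haveI : IsFreeGroup H := by infer_instance
  set B := IsFreeGroup.Generators H with hB
  set iso : H ≃* FreeGroup B := IsFreeGroup.toFreeGroup H with hiso
  set q' : F →* FreeGroup B := iso.toMonoidHom.comp (sig w).rangeRestrict with hq'
  have hq'surj : Function.Surjective q' := iso.surjective.comp hq
  obtain ⟨hBfin, hBle⟩ := card_le_of_surjective q' hq'surj
  haveI := hBfin
  rw [Nat.card_eq_of_equiv_fin (Equiv.refl (Fin n))] at hBle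
  -- A ≤ H
  have hJH : ∀ y, J y ∈ H := fun y => ⟨J y, sig_J_apply w y⟩
  have hwH : w ∈ H := ⟨FreeGroup.of 0, sig_of_zero w⟩
  set θ : H →* FreeGroup {i : Fin n // i ≠ 0} := (rho (n := n)).comp H.subtype with hθ
  have hθsurj : Function.Surjective θ := by
    intro g
    exact ⟨⟨J g, hJH g⟩, rho_J_apply g⟩
  set θ' : FreeGroup B →* FreeGroup {i : Fin n // i ≠ 0} :=
    θ.comp iso.symm.toMonoidHom with hθ'
  have hθ'surj : Function.Surjective θ' := hθsurj.comp iso.symm.surjective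
  obtain ⟨-, hSle⟩ := card_le_of_surjective θ' hθ'surj
  have hScard : Nat.card {i : Fin n // i ≠ 0} = n - 1 := by
    rw [Nat.card_eq_fintype_card, Fintype.card_subtype_compl, Fintype.card_fin,
      Fintype.card_subtype_eq]
  rw [hScard] at hSle
  have hn1 : 1 ≤ n := Nat.one_le_iff_ne_zero.mpr (NeZero.ne n)
  rcases (by omega : Nat.card B = n ∨ Nat.card B = n - 1) with hc | hc
  · -- full rank: q' is injective by Hopf
    have hinj : Function.Injective q' :=
      hopfian_pair (by simp [hc]) q' hq'surj
    have : Function.Injective (sig w).rangeRestrict := fun x y hxy => hinj (by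
      show q' x = q' y
      rw [hq', MonoidHom.comp_apply, MonoidHom.comp_apply, hxy])
    intro x y hxy
    exact this (Subtype.ext hxy)
  · -- rank n-1: contradiction with w ∉ A
    exfalso
    have hinj' : Function.Injective θ' :=
      hopfian_pair (by rw [hc, hScard]) θ' hθ'surj
    have hinjθ : Function.Injective θ := by
      intro x y hxy
      have : θ' (iso x) = θ' (iso y) := by
        rw [hθ']
        simp only [MonoidHom.comp_apply, MulEquiv.coe_toMonoidHom]
        rw [MulEquiv.symm_apply_apply, MulEquiv.symm_apply_apply]
        exact hxy
      have := hinj' this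
      exact iso.injective this
    apply hw
    have heq : θ ⟨w, hwH⟩ = θ ⟨J (rho w), hJH _⟩ := by
      show rho w = rho (J (rho w))
      rw [rho_J_apply]
    have := hinjθ heq
    have hww : w = J (rho w) := congrArg Subtype.val this
    exact ⟨rho w, hww.symm⟩

/-- The crux: iterating the substitution map on the generator `0` never gives `1`. -/
theorem iterate_sig_ne_one (w : F) (hw : w ≠ 1) (d : ℕ) (hd : 1 ≤ d) :
    (⇑(sig w))^[d] (FreeGroup.of 0) ≠ 1 := by
  by_cases hmem : w ∈ (J (n := n)).range
  · obtain ⟨y, hy⟩ := hmem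
    obtain ⟨k, rfl⟩ : ∃ k, d = k + 1 := ⟨d - 1, by omega⟩
    have hfix : sig w w = w := by rw [← hy, sig_J_apply]
    have : (⇑(sig w))^[k + 1] (FreeGroup.of 0) = w := by
      rw [Function.iterate_succ_apply, sig_of_zero]
      exact Function.iterate_fixed hfix k
    rw [this]
    exact hw
  · have hinj := sig_injective w hmem
    intro h1
    have hIt : Function.Injective ((⇑(sig w))^[d]) := Function.Injective.iterate hinj d
    have h2 : (⇑(sig w))^[d] (1 : F) = 1 := Function.iterate_fixed (map_one _) d
    exact FreeGroup.of_ne_one (0 : Fin n) (hIt (h1.trans h2.symm))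

end Star


lemma sig_of_zero' {n : ℕ} [NeZero n] (w : FreeGroup (Fin n)) :
    sig w (FreeGroup.of 0) = w := by
  rw [sig, FreeGroup.lift_apply_of, Function.update_self]

lemma hom_comp_lift {α : Type*} {G H : Type*} [Group G] [Group H] (ψ : G →* H)
    (h : α → G) : ψ.comp (FreeGroup.lift h) = FreeGroup.lift (fun a => ψ (h a)) := by
  apply FreeGroup.ext_hom
  intro a
  simp [FreeGroup.lift_apply_of]

section Glue

variable {n : ℕ} [NeZero n] {G : Type*} [Group G]

/-- substitution as a plain function -/
def Phi (w : FreeGroup (Fin n)) : FreeGroup (Fin n) → FreeGroup (Fin n) :=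
  fun g => FreeGroup.lift (Function.update FreeGroup.of (0 : Fin n) g) w

lemma Phi_of_zero (w : FreeGroup (Fin n)) : Phi w (FreeGroup.of 0) = w := by
  rw [Phi, Function.update_eq_self, FreeGroup.lift_of_apply]

lemma Phi_sig_comm (w : FreeGroup (Fin n)) (x : FreeGroup (Fin n)) :
    Phi w (sig w x) = sig w (Phi w x) := by
  rw [Phi, Phi]
  have : sig w (FreeGroup.lift (Function.update FreeGroup.of (0 : Fin n) x) w)
      = FreeGroup.lift (fun i => sig w (Function.update FreeGroup.of (0 : Fin n) x i)) w := by
    rw [← hom_comp_lift]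
    rfl
  rw [this]
  have h4 : (Function.update FreeGroup.of (0 : Fin n) (sig w x))
      = fun i => sig w (Function.update FreeGroup.of (0 : Fin n) x i) := by
    funext i
    by_cases hi : i = (0 : Fin n)
    · subst hi
      rw [Function.update_self, Function.update_self]
    · rw [Function.update_of_ne hi, Function.update_of_ne hi, sig, FreeGroup.lift_apply_of,
        Function.update_of_ne hi]
  exact congrArg (fun (h : Fin n → FreeGroup (Fin n)) => FreeGroup.lift h w) h4

lemma Phi_sig_iter_comm (w : FreeGroup (Fin n)) (d : ℕ) (x : FreeGroup (Fin n)) :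
    Phi w ((⇑(sig w))^[d] x) = (⇑(sig w))^[d] (Phi w x) := by
  induction d generalizing x with
  | zero => rfl
  | succ k ih =>
    rw [Function.iterate_succ_apply, Function.iterate_succ_apply, ih, Phi_sig_comm]

lemma Phi_iter_eq_sig_iter (w : FreeGroup (Fin n)) (d : ℕ) :
    (Phi w)^[d] (FreeGroup.of 0) = (⇑(sig w))^[d] (FreeGroup.of 0) := by
  induction d with
  | zero => rfl
  | succ k ih =>
    rw [Function.iterate_succ_apply', ih, Phi_sig_iter_comm, Phi_of_zero,
      Function.iterate_succ_apply, sig_of_zero']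

lemma verbal_natural (w : FreeGroup (Fin n)) (ψ : FreeGroup (Fin n) →* G)
    (g : FreeGroup (Fin n)) :
    verbalMap w (fun i => ψ (FreeGroup.of i)) (ψ g) = ψ (Phi w g) := by
  rw [verbalMap, Phi]
  have : ψ (FreeGroup.lift (Function.update FreeGroup.of (0 : Fin n) g) w)
      = FreeGroup.lift (fun i => ψ (Function.update FreeGroup.of (0 : Fin n) g i)) w := by
    rw [← hom_comp_lift]
    rfl
  rw [this]
  have h4 : (Function.update (fun i => ψ (FreeGroup.of i)) (0 : Fin n) (ψ g))
      = fun i => ψ (Function.update FreeGroup.of (0 : Fin n) g i) := by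
    funext i
    by_cases hi : i = (0 : Fin n)
    · subst hi
      rw [Function.update_self, Function.update_self]
    · rw [Function.update_of_ne hi, Function.update_of_ne hi]
  exact congrArg (fun (h : Fin n → G) => FreeGroup.lift h w) h4

lemma verbal_iter (w : FreeGroup (Fin n)) (ψ : FreeGroup (Fin n) →* G) (d : ℕ) :
    (verbalMap w (fun i => ψ (FreeGroup.of i)))^[d] (ψ (FreeGroup.of 0))
      = ψ ((Phi w)^[d] (FreeGroup.of 0)) := by
  induction d with
  | zero => rfl
  | succ k ih =>
    rw [Function.iterate_succ_apply', ih, Function.iterate_succ_apply', verbal_natural]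

end Glue


end IterIdent

open IterIdent in
theorem no_iterated_identity_of_free_subgroup (G : Type*) [Group G]
    (hfree : ∃ φ : FreeGroup (Fin 2) →* G, Function.Injective φ) :
    ∀ (n : ℕ) [NeZero n] (w : FreeGroup (Fin n)), w ≠ 1 → ¬ IsEIteratedIdentity w G := by
  obtain ⟨φ, hφ⟩ := hfree
  intro n _ w hw hId
  obtain ⟨e, he⟩ := exists_embedding_into_F2 (Fin n)
  have hmapinj : Function.Injective (FreeGroup.map (finTwoEquiv.symm : Bool → Fin 2)) := by
    intro x y h
    have h2 : FreeGroup.map (finTwoEquiv : Fin 2 → Bool)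
          (FreeGroup.map (finTwoEquiv.symm : Bool → Fin 2) x)
        = FreeGroup.map (finTwoEquiv : Fin 2 → Bool)
          (FreeGroup.map (finTwoEquiv.symm : Bool → Fin 2) y) := by rw [h]
    rw [FreeGroup.map.comp, FreeGroup.map.comp] at h2
    have h3 : ((finTwoEquiv : Fin 2 → Bool) ∘ (finTwoEquiv.symm : Bool → Fin 2)) = id :=
      funext fun b => finTwoEquiv.apply_symm_apply b
    rwa [h3, FreeGroup.map.id, FreeGroup.map.id] at h2
  set ψ : FreeGroup (Fin n) →* G :=
    φ.comp ((FreeGroup.map (finTwoEquiv.symm : Bool → Fin 2)).comp e) with hψ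
  have hψinj : Function.Injective ψ := by
    intro x y h
    rw [hψ] at h
    simp only [MonoidHom.comp_apply] at h
    exact he (hmapinj (hφ h))
  obtain ⟨d, hd1, hd⟩ := hId (fun i => ψ (FreeGroup.of i))
  rw [verbal_iter w ψ d, Phi_iter_eq_sig_iter] at hd
  have : (⇑(sig w))^[d] (FreeGroup.of 0) = 1 := by
    apply hψinj
    rw [hd, _root_.map_one]
  exact iterate_sig_ne_one w hw d hd1 this
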